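/- Let {Λ(t)} be a family of completely positive trace-nonincreasing maps on a finite-dimensional matrix algebra that is CP-divisible, i.e., for all t₂ ≥ t₁ ≥ 0 there exists a completely positive trace-nonincreasing map Θ(t₂,t₁) with Λ(t₂) = Θ(t₂,t₁) ∘ Λ(t₁). Then for any two density operators ρ₁, ρ₂, the quantity p_succ(t) = ¼( tr Λ(t)[ρ₁] + tr Λ(t)[ρ₂] + ‖Λ(t)[ρ₁] − Λ(t)[ρ₂]‖₁ ) is a nonincreasing function of t. -/

import Mathlib

open Matrix
open scoped ComplexOrder

/-- The trace norm `‖A‖₁ = tr √(AᴴA)` of a complex square matrix. -/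
noncomputable def traceNorm {n : Type*} [Fintype n] [DecidableEq n]
    (A : Matrix n n ℂ) : ℝ :=
  (((Matrix.posSemidef_conjTranspose_mul_self A).1.eigenvectorUnitary.1 *
      diagonal (((↑) : ℝ → ℂ) ∘ (√·) ∘ (Matrix.posSemidef_conjTranspose_mul_self A).1.eigenvalues) *
      (star (Matrix.posSemidef_conjTranspose_mul_self A).1.eigenvectorUnitary : Matrix n n ℂ)).trace).re

/-- The blockwise extension `Id_n ⊗ Λ` of a map on matrices. -/
def blockApply {d e : Type*} (n : ℕ) (Λ : Matrix d d ℂ → Matrix e e ℂ)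
    (M : Matrix (Fin n × d) (Fin n × d) ℂ) : Matrix (Fin n × e) (Fin n × e) ℂ :=
  fun p q => Λ (Matrix.of fun a b => M (p.1, a) (q.1, b)) p.2 q.2

/-- `Λ` is completely positive: `Id_n ⊗ Λ` maps positive semidefinite matrices to
positive semidefinite matrices, for every `n`. -/
def IsCompletelyPositive {d e : Type*} [Fintype d] [Fintype e]
    (Λ : Matrix d d ℂ → Matrix e e ℂ) : Prop :=
  ∀ (n : ℕ) (M : Matrix (Fin n × d) (Fin n × d) ℂ),
    M.PosSemidef → (blockApply n Λ M).PosSemidef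

/-- `Λ` is trace nonincreasing: `tr Λ[ρ] ≤ tr ρ` for every positive semidefinite `ρ`. -/
def IsTraceNonincreasing {d e : Type*} [Fintype d] [Fintype e]
    (Λ : Matrix d d ℂ → Matrix e e ℂ) : Prop :=
  ∀ ρ : Matrix d d ℂ, ρ.PosSemidef → (Λ ρ).trace.re ≤ ρ.trace.re

namespace ProofAux
variable {d : Type*} [Fintype d] [DecidableEq d]

noncomputable def conjD {H : Matrix d d ℂ} (hH : H.IsHermitian) (g : d → ℝ) : Matrix d d ℂ :=
  (hH.eigenvectorUnitary : Matrix d d ℂ) * diagonal (fun i => (g i : ℂ)) *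
    star (hH.eigenvectorUnitary : Matrix d d ℂ)

lemma diag_psd (g : d → ℝ) (hg : ∀ i, 0 ≤ g i) :
    (diagonal (fun i => ((g i : ℂ))) : Matrix d d ℂ).PosSemidef :=
  posSemidef_diagonal_iff.mpr fun i => Complex.zero_le_real.mpr (hg i)

lemma conjD_posSemidef {H : Matrix d d ℂ} (hH : H.IsHermitian) {g : d → ℝ}
    (hg : ∀ i, 0 ≤ g i) : (conjD hH g).PosSemidef := by
  have h := (diag_psd g hg).mul_mul_conjTranspose_same (hH.eigenvectorUnitary : Matrix d d ℂ)
  simpa [conjD, Matrix.star_eq_conjTranspose] using h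

lemma conjD_trace {H : Matrix d d ℂ} (hH : H.IsHermitian) (g : d → ℝ) :
    (conjD hH g).trace = ∑ i, (g i : ℂ) := by
  rw [conjD, trace_mul_cycle, Unitary.coe_star_mul_self, one_mul, trace_diagonal]

lemma conjD_sub {H : Matrix d d ℂ} (hH : H.IsHermitian) (g₁ g₂ : d → ℝ) :
    conjD hH g₁ - conjD hH g₂ = conjD hH (g₁ - g₂) := by
  have h : (diagonal fun i => ((g₁ i : ℂ))) - diagonal (fun i => ((g₂ i : ℂ)))
      = diagonal fun i => (((g₁ - g₂) i : ℝ) : ℂ) := by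
    have h2 : (fun i => ((g₁ i : ℂ)) - ((g₂ i : ℂ))) = fun i => (((g₁ - g₂) i : ℝ) : ℂ) := by
      funext i
      simp [Pi.sub_apply]
    rw [diagonal_sub, h2]
  simp only [conjD, ← sub_mul, ← Matrix.mul_sub, h]

lemma conjD_mul {H : Matrix d d ℂ} (hH : H.IsHermitian) (g₁ g₂ : d → ℝ) :
    conjD hH g₁ * conjD hH g₂ = conjD hH (g₁ * g₂) := by
  have cancel : ∀ X : Matrix d d ℂ, (star (hH.eigenvectorUnitary : Matrix d d ℂ)) *
      ((hH.eigenvectorUnitary : Matrix d d ℂ) * X) = X := fun X => by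
    rw [← Matrix.mul_assoc, Unitary.coe_star_mul_self, Matrix.one_mul]
  have hdd : (diagonal fun i => (g₁ i : ℂ)) * (diagonal fun i => (g₂ i : ℂ))
      = diagonal fun i => ((g₁ * g₂) i : ℂ) := by
    have h2 : (fun i => ((g₁ i : ℂ)) * ((g₂ i : ℂ))) = fun i => (((g₁ * g₂) i : ℝ) : ℂ) := by
      funext i
      simp [Pi.mul_apply]
    rw [diagonal_mul_diagonal, h2]
  simp only [conjD, Matrix.mul_assoc]
  rw [cancel, show (diagonal fun i => (g₁ i : ℂ)) * ((diagonal fun i => (g₂ i : ℂ)) *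
      star (hH.eigenvectorUnitary : Matrix d d ℂ)) = ((diagonal fun i => (g₁ i : ℂ)) *
      (diagonal fun i => (g₂ i : ℂ))) * star (hH.eigenvectorUnitary : Matrix d d ℂ) from
      (Matrix.mul_assoc _ _ _).symm, hdd]

lemma conjD_eigenvalues {H : Matrix d d ℂ} (hH : H.IsHermitian) :
    conjD hH hH.eigenvalues = H := (hH.spectral_theorem).symm

open scoped MatrixOrder in
lemma traceNorm_eq_sqrt (A : Matrix d d ℂ) :
    traceNorm A = (CFC.sqrt (Aᴴ * A)).trace.re := by
  have h0 : (0 : Matrix d d ℂ) ≤ Aᴴ * A := (posSemidef_conjTranspose_mul_self A).nonneg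
  rw [CFC.sqrt_eq_cfc, cfc_nnreal_eq_real _ _ h0, (posSemidef_conjTranspose_mul_self A).1.cfc_eq,
    IsHermitian.cfc, Unitary.conjStarAlgAut_apply, traceNorm]
  congr 4
  funext i j
  simp [diagonal_apply, Real.coe_sqrt,
    max_eq_left ((posSemidef_conjTranspose_mul_self A).eigenvalues_nonneg i)]

open scoped MatrixOrder in
lemma traceNorm_eq_sum_abs {H : Matrix d d ℂ} (hH : H.IsHermitian) :
    traceNorm H = ∑ i, |hH.eigenvalues i| := by
  have hS : (conjD hH (fun i => |hH.eigenvalues i|)).PosSemidef :=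
    conjD_posSemidef hH (fun i => abs_nonneg _)
  have hsq : (conjD hH (fun i => |hH.eigenvalues i|)) ^ 2 = Hᴴ * H := by
    rw [sq, conjD_mul, hH.eq]
    have h : ((fun i => |hH.eigenvalues i|) * fun i => |hH.eigenvalues i|)
        = hH.eigenvalues * hH.eigenvalues := by
      ext i
      simp [abs_mul_abs_self]
    rw [h, ← conjD_mul, conjD_eigenvalues]
  have := (CFC.sqrt_unique (a := Hᴴ * H) (by rw [← sq]; exact hsq) hS.nonneg).symm
  rw [traceNorm_eq_sqrt, ← this, conjD_trace, Complex.re_sum]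
  simp

open scoped MatrixOrder in
lemma traceNorm_psd {A : Matrix d d ℂ} (hA : A.PosSemidef) :
    traceNorm A = A.trace.re := by
  have hsq : A ^ 2 = Aᴴ * A := by rw [sq, hA.1.eq]
  have := (CFC.sqrt_unique (a := Aᴴ * A) (by rw [← sq]; exact hsq) hA.nonneg).symm
  rw [traceNorm_eq_sqrt, ← this]

lemma diag_re_nonneg {A : Matrix d d ℂ} (hA : A.PosSemidef) (i : d) :
    0 ≤ (A i i).re := by
  have := hA.re_dotProduct_nonneg (Pi.single i 1)
  simpa [dotProduct, mulVec, Pi.single_apply] using this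

lemma trace_conj_unitary {A : Matrix d d ℂ} {H : Matrix d d ℂ} (hH : H.IsHermitian) :
    (star (hH.eigenvectorUnitary : Matrix d d ℂ) * A *
        (hH.eigenvectorUnitary : Matrix d d ℂ)).trace = A.trace := by
  rw [trace_mul_cycle, Matrix.mem_unitaryGroup_iff.mp hH.eigenvectorUnitary.2, one_mul]

lemma traceNorm_sub_le {P Q : Matrix d d ℂ} (hP : P.PosSemidef) (hQ : Q.PosSemidef) :
    traceNorm (P - Q) ≤ P.trace.re + Q.trace.re := by
  have hH : (P - Q).IsHermitian := hP.1.sub hQ.1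
  set U : Matrix d d ℂ := (hH.eigenvectorUnitary : Matrix d d ℂ) with hU
  have hP' : (star U * P * U).PosSemidef := by
    have := hP.conjTranspose_mul_mul_same U
    simpa [Matrix.star_eq_conjTranspose] using this
  have hQ' : (star U * Q * U).PosSemidef := by
    have := hQ.conjTranspose_mul_mul_same U
    simpa [Matrix.star_eq_conjTranspose] using this
  have hdiag : star U * P * U - (star U * Q * U)
      = diagonal (RCLike.ofReal ∘ hH.eigenvalues) := by
    rw [← hH.conjStarAlgAut_star_eigenvectorUnitary, Unitary.conjStarAlgAut_star_apply]
    simp only [Matrix.sub_mul, Matrix.mul_sub, hU]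
  have hev : ∀ i, hH.eigenvalues i
      = ((star U * P * U) i i).re - ((star U * Q * U) i i).re := by
    intro i
    have : ((star U * P * U) - (star U * Q * U)) i i = ((hH.eigenvalues i : ℝ) : ℂ) := by
      rw [hdiag]; simp
    have h2 := congrArg Complex.re this
    simpa [Matrix.sub_apply] using h2.symm
  have habs : ∀ i, |hH.eigenvalues i|
      ≤ ((star U * P * U) i i).re + ((star U * Q * U) i i).re := by
    intro i
    rw [hev i]
    have h1 := diag_re_nonneg hP' i
    have h2 := diag_re_nonneg hQ' i
    rw [abs_sub_le_iff]
    constructor <;> linarith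
  calc traceNorm (P - Q) = ∑ i, |hH.eigenvalues i| := traceNorm_eq_sum_abs hH
    _ ≤ ∑ i, (((star U * P * U) i i).re + ((star U * Q * U) i i).re) :=
        Finset.sum_le_sum fun i _ => habs i
    _ = (star U * P * U).trace.re + (star U * Q * U).trace.re := by
        rw [Finset.sum_add_distrib]
        congr 1 <;> simp [Matrix.trace, Matrix.diag, Complex.re_sum]
    _ = P.trace.re + Q.trace.re := by rw [trace_conj_unitary hH, trace_conj_unitary hH]

lemma jordan {H : Matrix d d ℂ} (hH : H.IsHermitian) :
    ∃ P Q : Matrix d d ℂ, P.PosSemidef ∧ Q.PosSemidef ∧ H = P - Q ∧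
      traceNorm H = P.trace.re + Q.trace.re := by
  refine ⟨conjD hH (fun i => max (hH.eigenvalues i) 0),
    conjD hH (fun i => max (-hH.eigenvalues i) 0),
    conjD_posSemidef hH (fun i => le_max_right _ _),
    conjD_posSemidef hH (fun i => le_max_right _ _), ?_, ?_⟩
  · rw [conjD_sub]
    have h : ((fun i => max (hH.eigenvalues i) 0) - fun i => max (-hH.eigenvalues i) 0)
        = hH.eigenvalues := by
      ext i
      simp only [Pi.sub_apply]
      exact max_zero_sub_max_neg_zero_eq_self _
    rw [h, conjD_eigenvalues]
  · rw [traceNorm_eq_sum_abs hH, conjD_trace, conjD_trace, Complex.re_sum, Complex.re_sum]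
    simp only [Complex.ofReal_re]
    rw [← Finset.sum_add_distrib]
    exact Finset.sum_congr rfl fun i _ => (max_zero_add_max_neg_zero_eq_abs_self _).symm

end ProofAux

namespace ProofAux

lemma posSemidef_map {d : Type*} [Fintype d] [DecidableEq d]
    {Λ : Matrix d d ℂ → Matrix d d ℂ} (hCP : IsCompletelyPositive Λ)
    {ρ : Matrix d d ℂ} (hρ : ρ.PosSemidef) : (Λ ρ).PosSemidef := by
  have hM : (ρ.submatrix (Prod.snd : Fin 1 × d → d) Prod.snd).PosSemidef :=
    hρ.submatrix _
  have h := (hCP 1 _ hM).submatrix (fun i : d => ((0 : Fin 1), i))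
  have heq : (blockApply 1 Λ (ρ.submatrix Prod.snd Prod.snd)).submatrix
      (fun i : d => ((0 : Fin 1), i)) (fun i : d => ((0 : Fin 1), i)) = Λ ρ := rfl
  rwa [heq] at h

lemma traceNorm_map_le {d : Type*} [Fintype d] [DecidableEq d]
    (Θ : Matrix d d ℂ →ₗ[ℂ] Matrix d d ℂ) (hCP : IsCompletelyPositive (⇑Θ))
    (hTNI : IsTraceNonincreasing (⇑Θ)) {H : Matrix d d ℂ} (hH : H.IsHermitian) :
    traceNorm (Θ H) ≤ traceNorm H := by
  obtain ⟨P, Q, hP, hQ, hPQ, htr⟩ := jordan hH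
  have h1 : Θ H = Θ P - Θ Q := by rw [hPQ, map_sub]
  have hΘP := posSemidef_map hCP hP
  have hΘQ := posSemidef_map hCP hQ
  calc traceNorm (Θ H) = traceNorm (Θ P - Θ Q) := by rw [h1]
    _ ≤ (Θ P).trace.re + (Θ Q).trace.re := traceNorm_sub_le hΘP hΘQ
    _ ≤ P.trace.re + Q.trace.re := add_le_add (hTNI P hP) (hTNI Q hQ)
    _ = traceNorm H := htr.symm

end ProofAux

/-- For a CP-divisible family of completely positive trace-nonincreasing maps, the
success probability
`p_succ(t) = ¼(tr Λ(t)[ρ₁] + tr Λ(t)[ρ₂] + ‖Λ(t)[ρ₁] − Λ(t)[ρ₂]‖₁)` is a nonincreasing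
function of `t` for any two density operators `ρ₁, ρ₂`. -/
theorem stmt6 {d : Type*} [Fintype d] [DecidableEq d]
    (Λ : ℝ → (Matrix d d ℂ →ₗ[ℂ] Matrix d d ℂ))
    (hCP : ∀ t, 0 ≤ t → IsCompletelyPositive (⇑(Λ t)))
    (hTNI : ∀ t, 0 ≤ t → IsTraceNonincreasing (⇑(Λ t)))
    (hdiv : ∀ t₁ t₂ : ℝ, 0 ≤ t₁ → t₁ ≤ t₂ →
      ∃ Θ : Matrix d d ℂ →ₗ[ℂ] Matrix d d ℂ,
        IsCompletelyPositive (⇑Θ) ∧ IsTraceNonincreasing (⇑Θ) ∧ Λ t₂ = Θ ∘ₗ Λ t₁)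
    (ρ₁ ρ₂ : Matrix d d ℂ)
    (hρ₁ : ρ₁.PosSemidef) (htr₁ : ρ₁.trace = 1)
    (hρ₂ : ρ₂.PosSemidef) (htr₂ : ρ₂.trace = 1) :
    AntitoneOn (fun t : ℝ =>
        (1/4 : ℝ) * ((Λ t ρ₁).trace.re + (Λ t ρ₂).trace.re
          + traceNorm (Λ t ρ₁ - Λ t ρ₂)))
      (Set.Ici (0 : ℝ)) := by
  intro t₁ ht₁ t₂ ht₂ h₁₂
  simp only [Set.mem_Ici] at ht₁ ht₂
  obtain ⟨Θ, hΘCP, hΘTNI, hc⟩ := hdiv t₁ t₂ ht₁ h₁₂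
  have hA₁ : (Λ t₁ ρ₁).PosSemidef := ProofAux.posSemidef_map (hCP t₁ ht₁) hρ₁
  have hA₂ : (Λ t₁ ρ₂).PosSemidef := ProofAux.posSemidef_map (hCP t₁ ht₁) hρ₂
  have he₁ : Λ t₂ ρ₁ = Θ (Λ t₁ ρ₁) := by rw [hc]; rfl
  have he₂ : Λ t₂ ρ₂ = Θ (Λ t₁ ρ₂) := by rw [hc]; rfl
  have htr1 : (Λ t₂ ρ₁).trace.re ≤ (Λ t₁ ρ₁).trace.re := by
    rw [he₁]; exact hΘTNI _ hA₁
  have htr2 : (Λ t₂ ρ₂).trace.re ≤ (Λ t₁ ρ₂).trace.re := by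
    rw [he₂]; exact hΘTNI _ hA₂
  have hnorm : traceNorm (Λ t₂ ρ₁ - Λ t₂ ρ₂) ≤ traceNorm (Λ t₁ ρ₁ - Λ t₁ ρ₂) := by
    rw [he₁, he₂, ← map_sub]
    exact ProofAux.traceNorm_map_le Θ hΘCP hΘTNI (hA₁.1.sub hA₂.1)
  dsimp only
  linarith
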